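/- Let κ be a field. The ideal of κ[ℝ₊] generated by the set of monomials {T^t : t ∈ ℝ≥0, t > 0} (equivalently, the ideal of all polynomials with vanishing constant coefficient) is not finitely generated as an ideal. In particular, κ[ℝ₊] is not a Noetherian ring. -/

import Mathlib

open scoped NNReal

noncomputable section

/-- The ring `κ[ℝ₊]` of polynomials with coefficients in `κ` and exponents in `ℝ≥0`,
realized as the monoid algebra of the additive monoid `ℝ≥0` over `κ`. -/
abbrev PersRing (κ : Type) [Field κ] : Type := AddMonoidAlgebra κ ℝ≥0

/-- The ideal of `κ[ℝ₊]` generated by the monomials `T^t` with `t > 0`, i.e. the ideal of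
all polynomials with vanishing constant coefficient. -/
def augmentationIdeal (κ : Type) [Field κ] : Ideal (PersRing κ) :=
  Ideal.span {x : PersRing κ | ∃ t : ℝ≥0, 0 < t ∧ x = AddMonoidAlgebra.single t (1 : κ)}

/-- The ideal of elements all of whose exponents satisfy an add-absorbing predicate `P`. -/
def suppIdeal (κ : Type) [Field κ] (P : ℝ≥0 → Prop)
    (hP : ∀ a b : ℝ≥0, P b → P (a + b)) : Ideal (PersRing κ) where
  carrier := {x | ∀ t ∈ x.coeff.support, P t}
  zero_mem' := by simp
  add_mem' := by
    intro x y hx hy t ht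
    rcases Finset.mem_union.1 (Finsupp.support_add ht) with h | h
    · exact hx t h
    · exact hy t h
  smul_mem' := by
    classical
    intro c x hx t ht
    have : t ∈ (c * x).coeff.support := by simpa using ht
    rcases Finset.mem_add.1 (AddMonoidAlgebra.support_coeff_mul_subset c x this) with ⟨a, _, b, hb, rfl⟩
    exact hP a b (hx b hb)

lemma augmentation_le_pos (κ : Type) [Field κ] :
    augmentationIdeal κ ≤ suppIdeal κ (fun t => 0 < t)
      (fun a b hb => lt_of_lt_of_le hb le_add_self) := by
  apply Ideal.span_le.2
  rintro x ⟨t, ht, rfl⟩ s hs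
  have := Finsupp.support_single_subset hs
  simp only [Finset.mem_singleton] at this
  exact this ▸ ht

/-- The ideal of `κ[ℝ₊]` generated by the monomials `T^t`, `t > 0`, is not finitely
generated; in particular `κ[ℝ₊]` is not a Noetherian ring. -/
theorem augmentationIdeal_not_fg_and_not_noetherian (κ : Type) [Field κ] :
    ¬ (augmentationIdeal κ).FG ∧ ¬ IsNoetherianRing (PersRing κ) := by
  classical
  have hfg : ¬ (augmentationIdeal κ).FG := by
    rintro ⟨S, hS⟩
    -- every exponent occurring in a generator is positive
    have hpos : ∀ f ∈ S, ∀ t ∈ (f : PersRing κ).coeff.support, 0 < t := by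
      intro f hf
      have hf' : f ∈ augmentationIdeal κ := hS ▸ Ideal.subset_span hf
      exact augmentation_le_pos κ hf'
    set U : Finset ℝ≥0 := S.sup (fun f => f.coeff.support) with hU
    set ε : ℝ≥0 := if h : U.Nonempty then U.min' h else 1 with hε
    have hεpos : 0 < ε := by
      by_cases h : U.Nonempty
      · rw [hε, dif_pos h]
        obtain ⟨f, hf, hmin⟩ := Finset.mem_sup.1 (U.min'_mem h)
        exact hpos f hf _ hmin
      · rw [hε, dif_neg h]; norm_num
    -- the span of S lies in the ideal of elements with exponents ≥ ε
    have hPabs : ∀ a b : ℝ≥0, ε ≤ b → ε ≤ a + b := fun a b hb => hb.trans le_add_self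
    have hle : augmentationIdeal κ ≤ suppIdeal κ (fun t => ε ≤ t) hPabs := by
      rw [← hS]
      apply Ideal.span_le.2
      intro f hf t ht
      have htU : t ∈ U := Finset.mem_sup.2 ⟨f, hf, ht⟩
      have hne : U.Nonempty := ⟨t, htU⟩
      rw [hε, dif_pos hne]
      exact U.min'_le t htU
    -- but T^(ε/2) is in the augmentation ideal and violates the bound
    have hmem : (AddMonoidAlgebra.single (ε / 2) (1 : κ) : PersRing κ) ∈ augmentationIdeal κ :=
      Ideal.subset_span ⟨ε / 2, by positivity, rfl⟩
    have hhalf : ε ≤ ε / 2 := by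
      refine hle hmem (ε / 2) ?_
      simp [Finsupp.mem_support_iff, AddMonoidAlgebra.coeff_single]
    exact absurd hhalf (not_le.2 (NNReal.half_lt_self hεpos.ne'))
  exact ⟨hfg, fun h => hfg (h.noetherian _)⟩

end
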